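/- Let R be a commutative integral domain and let A = R × R be equipped with the exchange involution (x, y)* = (y, x). Then Γ'(A) is disconnected: there is no path in Γ'(A) between any vertex of (R∖{0}) × {0} and any vertex of {0} × (R∖{0}). -/

import Mathlib

/-- The nonzero zero-divisors of `R × R`. -/
def ZstarProd (R : Type*) [CommRing R] : Set (R × R) :=
  {a | a ≠ 0 ∧ ∃ b : R × R, b ≠ 0 ∧ (a * b = 0 ∨ b * a = 0)}

/-- The generalized zero-divisor graph Γ'(R × R), with the exchange involution
`(x, y)* = (y, x)`. -/
def gammaPProd (R : Type*) [CommRing R] : SimpleGraph (ZstarProd R) where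
  Adj a b := a ≠ b ∧ ∃ n : ℕ, 0 < n ∧
      ((a : R × R) ^ n * (b : R × R).swap = 0 ∨ (b : R × R) ^ n * (a : R × R).swap = 0)
  symm := by
    refine ⟨?_⟩
    rintro a b ⟨hne, n, hn, h⟩
    exact ⟨hne.symm, n, hn, h.symm⟩
  loopless := by refine ⟨?_⟩; rintro a ⟨hne, -⟩; exact hne rfl

lemma adj_preserves {R : Type*} [CommRing R] [IsDomain R]
    {a b : ZstarProd R} (hab : (gammaPProd R).Adj a b)
    (ha : (a : R × R).2 = 0) : (b : R × R).2 = 0 := by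
  obtain ⟨-, n, hn, h⟩ := hab
  have ha1 : (a : R × R).1 ≠ 0 := by
    intro h1
    exact a.2.1 (Prod.ext h1 ha)
  rcases h with h | h
  · have := congrArg Prod.fst h
    simp [Prod.pow_fst, Prod.fst_mul] at this
    rcases this with h' | h'
    · exact absurd h'.1 ha1
    · exact h'
  · have := congrArg Prod.snd h
    simp [Prod.pow_snd, Prod.snd_mul, Prod.fst_swap] at this
    rcases this with h' | h'
    · exact h'.1
    · exact absurd h' ha1

/-- If `R` is an integral domain, then Γ'(R × R) (with exchange involution) is
disconnected: no vertex of `(R∖{0}) × {0}` is reachable from a vertex of `{0} × (R∖{0})`. -/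
theorem stmt_18 {R : Type*} [CommRing R] [IsDomain R]
    (x y : ZstarProd R)
    (hx : (x : R × R).1 ≠ 0 ∧ (x : R × R).2 = 0)
    (hy : (y : R × R).1 = 0 ∧ (y : R × R).2 ≠ 0) :
    ¬ (gammaPProd R).Reachable x y := by
  intro h
  obtain ⟨w⟩ := h
  have key : ∀ {a b : ZstarProd R}, (gammaPProd R).Walk a b →
      (a : R × R).2 = 0 → (b : R × R).2 = 0 := by
    intro a b w
    induction w with
    | nil => exact id
    | cons hadj _ ih => exact fun ha => ih (adj_preserves hadj ha)
  exact hy.2 (key w hx.2)
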